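/- Suppose the scatter fixed-point equation N·Ψ = ∑_{n=1}^N w_n x̃_n x̃_nᵀ holds. Then ∑_{n=1}^N w_n = N, i.e., the weights of the maximum likelihood scatter estimator of the multivariate t_ν distribution sum to the sample size. -/

import Mathlib

open Matrix BigOperators

lemma trace_mul_vecMulVec {r : ℕ} (A : Matrix (Fin r) (Fin r) ℝ) (u v : Fin r → ℝ) :
    (A * vecMulVec u v).trace = v ⬝ᵥ (A *ᵥ u) := by
  simp only [Matrix.trace, Matrix.diag, Matrix.mul_apply, vecMulVec_apply, dotProduct,
    Matrix.mulVec, dotProduct]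
  congr 1; ext i
  rw [Finset.mul_sum]
  congr 1; ext j
  ring

/-- If the scatter fixed-point equation `N • Ψ = ∑ wₙ x̃ₙ x̃ₙᵀ` holds,
then the weights sum to the sample size: `∑ wₙ = N`. -/
theorem sum_weights_eq_card
    (r N : ℕ) (hr : 1 ≤ r) (hN : 1 ≤ N) (ν : ℝ) (hν : 0 < ν)
    (x : Fin N → Fin r → ℝ) (μ : Fin r → ℝ)
    (Ψ : Matrix (Fin r) (Fin r) ℝ) (hΨ : Ψ.PosDef)
    (δ : Fin N → ℝ)
    (hδ : ∀ n, δ n = (x n - μ) ⬝ᵥ (Ψ⁻¹ *ᵥ (x n - μ)))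
    (w : Fin N → ℝ)
    (hw : ∀ n, w n = (ν + r) / (ν + δ n))
    (hfix : (N : ℝ) • Ψ = ∑ n, w n • vecMulVec (x n - μ) (x n - μ)) :
    ∑ n, w n = (N : ℝ) := by
  have hinv : Ψ⁻¹ * Ψ = 1 :=
    Matrix.nonsing_inv_mul Ψ (isUnit_iff_ne_zero.mpr hΨ.det_pos.ne')
  have hδnn : ∀ n, 0 ≤ δ n := fun n => by
    rw [hδ n]
    have := hΨ.inv.posSemidef.dotProduct_mulVec_nonneg (x n - μ)
    simpa using this
  have hden : ∀ n, 0 < ν + δ n := fun n => by linarith [hδnn n]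
  -- weights satisfy w n * (ν + δ n) = ν + r
  have hwd : ∀ n, w n * δ n = (ν + r) - ν * w n := fun n => by
    have h := (hden n).ne'
    rw [hw n]
    field_simp
    ring
  -- take trace of Ψ⁻¹ * (fixed point equation)
  have htr := congrArg (fun M => (Ψ⁻¹ * M).trace) hfix
  simp only [Matrix.mul_smul, Matrix.mul_sum, Matrix.trace_smul, Matrix.trace_sum,
    smul_eq_mul] at htr
  rw [hinv] at htr
  simp only [Matrix.trace_one, Fintype.card_fin] at htr
  have htr2 : (N : ℝ) * r = ∑ n, w n * δ n := by
    rw [htr]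
    congr 1; ext n
    rw [trace_mul_vecMulVec, ← hδ n]
  rw [Finset.sum_congr rfl (fun n _ => hwd n)] at htr2
  rw [Finset.sum_sub_distrib, Finset.sum_const, Finset.card_univ, Fintype.card_fin,
    ← Finset.mul_sum] at htr2
  have : ν * ∑ n, w n = ν * N := by push_cast at htr2 ⊢; ring_nf at htr2 ⊢; linarith
  exact mul_left_cancel₀ hν.ne' this
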